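/- The cardinality of the family of p-filters on ℕ is exactly 2^(2^ℵ₀). -/
import Mathlib

/-- `H` is an order-convex subset of `N`: it is contained in `N` and contains every
natural number lying strictly between two of its elements. -/
def OrdConnIn (N H : Set ℕ) : Prop :=
  H ⊆ N ∧ ∀ i ∈ H, ∀ j ∈ H, ∀ k : ℕ, i < k → k < j → k ∈ H

/-- `H` is a pile of `N`: a maximal order-convex subset of `N`. -/
def IsPile (N H : Set ℕ) : Prop :=
  OrdConnIn N H ∧ ∀ H' : Set ℕ, OrdConnIn N H' → H ⊆ H' → H' = H

/-- `Z` is admissible for `N`: there is a uniform bound `k` such that every pile of `N`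
meets `Z` in a finite set of cardinality at most `k`. -/
def Admissible (N Z : Set ℕ) : Prop :=
  ∃ k : ℕ, ∀ H : Set ℕ, IsPile N H → (H ∩ Z).Finite ∧ (H ∩ Z).ncard ≤ k

/-- A filter `σ` on `ℕ` is a p-filter if whenever `N ∈ σ` and `Z` is admissible for `N`,
also `N \ Z ∈ σ`. -/
def IsPFilter (σ : Filter ℕ) : Prop :=
  ∀ N ∈ σ, ∀ Z : Set ℕ, Admissible N Z → N \ Z ∈ σ

lemma exists_pile (N : Set ℕ) (a : ℕ) (ha : a ∈ N) :
    ∃ H, IsPile N H ∧ ∀ b, (∀ c, min a b ≤ c → c ≤ max a b → c ∈ N) → b ∈ H := by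
  have haM : ∀ c, min a a ≤ c → c ≤ max a a → c ∈ N := by
    intro c h1 h2
    rw [min_self] at h1; rw [max_self] at h2
    exact le_antisymm h2 h1 ▸ ha
  refine ⟨{b | ∀ c, min a b ≤ c → c ≤ max a b → c ∈ N}, ⟨⟨?_, ?_⟩, ?_⟩, fun b hb => hb⟩
  · intro b hb
    exact hb b (min_le_right a b) (le_max_right a b)
  · intro i hi j hj k hik hkj c h1 h2
    by_cases hc : c ≤ max a i
    · exact hi c (by omega) hc
    · exact hj c (by omega) (by omega)
  · intro H' hH' hsub
    have haH' : a ∈ H' := hsub haM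
    refine Set.Subset.antisymm ?_ hsub
    intro b hb c h1 h2
    by_cases hca : c = a
    · exact hca ▸ ha
    by_cases hcb : c = b
    · exact hcb ▸ hH'.1 hb
    have hmin : min a b ∈ H' := by
      rcases min_choice a b with h | h <;> rw [h] <;> assumption
    have hmax : max a b ∈ H' := by
      rcases max_choice a b with h | h <;> rw [h] <;> assumption
    exact hH'.1 (hH'.2 _ hmin _ hmax c (by omega) (by omega))

lemma convex_ncard_le {N Z : Set ℕ} {k : ℕ}
    (hadm : ∀ H : Set ℕ, IsPile N H → (H ∩ Z).Finite ∧ (H ∩ Z).ncard ≤ k)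
    (J : Set ℕ) (hJN : J ⊆ N)
    (hconv : ∀ i ∈ J, ∀ j ∈ J, ∀ c, i < c → c < j → c ∈ J) :
    (J ∩ Z).ncard ≤ k := by
  rcases J.eq_empty_or_nonempty with rfl | ⟨a, haJ⟩
  · simp
  obtain ⟨H, hH, hHmem⟩ := exists_pile N a (hJN haJ)
  have hJH : J ⊆ H := by
    intro b hb
    apply hHmem
    intro c h1 h2
    apply hJN
    by_cases hca : c = a
    · exact hca ▸ haJ
    by_cases hcb : c = b
    · exact hcb ▸ hb
    have hmin : min a b ∈ J := by
      rcases min_choice a b with h | h <;> rw [h] <;> assumption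
    have hmax : max a b ∈ J := by
      rcases max_choice a b with h | h <;> rw [h] <;> assumption
    exact hconv _ hmin _ hmax c (by omega) (by omega)
  exact le_trans (Set.ncard_le_ncard (Set.inter_subset_inter_left Z hJH) (hadm H hH).1)
    (hadm H hH).2

lemma key_count {N Z : Set ℕ} {k : ℕ}
    (hadm : ∀ H : Set ℕ, IsPile N H → (H ∩ Z).Finite ∧ (H ∩ Z).ncard ≤ k)
    (a b m : ℕ) (hm : (Set.Ico a b \ N).ncard ≤ m) :
    (Set.Ico a b ∩ N ∩ Z).ncard ≤ (m + 1) * k := by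
  set I := Set.Ico a b with hI
  have hIfin : I.Finite := Set.finite_Ico a b
  set D := I \ N with hD
  have hDfin : D.Finite := hIfin.subset Set.diff_subset
  set f : ℕ → ℕ := fun x => (D ∩ Set.Iio x).ncard with hf
  have hfmono : ∀ x y : ℕ, x ≤ y → f x ≤ f y := fun x y h =>
    Set.ncard_le_ncard (Set.inter_subset_inter_right D (Set.Iio_subset_Iio h))
      (hDfin.inter_of_left _)
  have hfm : ∀ x, f x ≤ m := fun x =>
    le_trans (Set.ncard_le_ncard Set.inter_subset_left hDfin) hm
  set J : ℕ → Set ℕ := fun c => {x | (x ∈ I ∧ x ∈ N) ∧ f x = c} with hJ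
  have hJN : ∀ c, J c ⊆ N := fun c x hx => hx.1.2
  have hconv : ∀ c, ∀ i ∈ J c, ∀ j ∈ J c, ∀ x, i < x → x < j → x ∈ J c := by
    intro c i hi j hj x hix hxj
    have hiI := hi.1.1
    have hjI := hj.1.1
    have hxI : x ∈ I := by
      rw [hI, Set.mem_Ico] at *
      omega
    have hxN : x ∈ N := by
      by_contra hxN
      have hxD : x ∈ D := ⟨hxI, hxN⟩
      have h1 : insert x (D ∩ Set.Iio i) ⊆ D ∩ Set.Iio j := by
        intro y hy
        rcases hy with rfl | hy
        · exact ⟨hxD, hxj⟩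
        · exact ⟨hy.1, by have := hy.2; simp only [Set.mem_Iio] at *; omega⟩
      have h2 : (insert x (D ∩ Set.Iio i)).ncard ≤ f j :=
        Set.ncard_le_ncard h1 (hDfin.inter_of_left _)
      rw [Set.ncard_insert_of_notMem (fun h => by
          have := h.2; simp only [Set.mem_Iio] at this; omega)
        (hDfin.inter_of_left _)] at h2
      have e1 := hi.2
      have e2 := hj.2
      simp only [hf] at e1 e2 h2
      omega
    have m1 := hfmono i x (le_of_lt hix)
    have m2 := hfmono x j (le_of_lt hxj)
    have e1 := hi.2
    have e2 := hj.2
    exact ⟨⟨hxI, hxN⟩, by omega⟩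
  have hsub : I ∩ N ∩ Z ⊆ ⋃ c ∈ Finset.range (m + 1), (J c ∩ Z) := by
    intro x hx
    have : x ∈ J (f x) := ⟨⟨hx.1.1, hx.1.2⟩, rfl⟩
    exact Set.mem_biUnion (Finset.mem_range.mpr (Nat.lt_succ_of_le (hfm x))) ⟨this, hx.2⟩
  have hcount : ∀ r : ℕ, (⋃ c ∈ Finset.range r, (J c ∩ Z)).ncard ≤ r * k := by
    intro r
    induction r with
    | zero => simp
    | succ r ih =>
      rw [Finset.range_add_one]
      rw [show (⋃ c ∈ insert r (Finset.range r), (J c ∩ Z)) =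
          (J r ∩ Z) ∪ ⋃ c ∈ Finset.range r, (J c ∩ Z) by simp [Set.biUnion_insert]]
      calc ((J r ∩ Z) ∪ ⋃ c ∈ Finset.range r, (J c ∩ Z)).ncard
          ≤ (J r ∩ Z).ncard + (⋃ c ∈ Finset.range r, (J c ∩ Z)).ncard :=
            Set.ncard_union_le _ _
        _ ≤ k + r * k := add_le_add (convex_ncard_le hadm (J r) (hJN r) (hconv r)) ih
        _ ≤ (r + 1) * k := by ring_nf; omega
  have hfinU : (⋃ c ∈ Finset.range (m + 1), (J c ∩ Z)).Finite := by
    apply Set.Finite.biUnion (Finset.finite_toSet _)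
    intro c _
    exact hIfin.subset (fun x hx => hx.1.1.1)
  exact le_trans (Set.ncard_le_ncard hsub hfinU) (hcount (m + 1))


def tblock : ℕ → ℕ
  | 0 => 0
  | n + 1 => tblock n + n + 1

def blk (n : ℕ) : Set ℕ := Set.Ico (tblock n) (tblock (n + 1))

lemma blk_finite (n : ℕ) : (blk n).Finite := Set.finite_Ico _ _

lemma blk_ncard (n : ℕ) : (blk n).ncard = n + 1 := by
  rw [blk, show Set.Ico (tblock n) (tblock (n+1)) = ↑(Finset.Ico (tblock n) (tblock (n+1))) by
    simp, Set.ncard_coe_finset, Nat.card_Ico, show tblock (n+1) = tblock n + n + 1 from rfl]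
  omega

lemma tblock_mono : Monotone tblock := by
  apply monotone_nat_of_le_succ
  intro n
  show tblock n ≤ tblock n + n + 1
  omega

lemma blk_disj {n j : ℕ} (h : n ≠ j) : blk n ∩ blk j = ∅ := by
  rcases Nat.lt_or_ge n j with hlt | hge
  · have : tblock (n+1) ≤ tblock j := tblock_mono hlt
    ext x; simp only [blk, Set.mem_inter_iff, Set.mem_Ico]; constructor
    · rintro ⟨h1, h2⟩; omega
    · intro hx; exact absurd hx (Set.notMem_empty x)
  · have hlt : j < n := by omega
    have : tblock (j+1) ≤ tblock n := tblock_mono hlt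
    ext x; simp only [blk, Set.mem_inter_iff, Set.mem_Ico]; constructor
    · rintro ⟨h1, h2⟩; omega
    · intro hx; exact absurd hx (Set.notMem_empty x)

def pf (F : Filter ℕ) : Filter ℕ where
  sets := {N | ∃ m, {n | (blk n \ N).ncard ≤ m} ∈ F}
  univ_sets := by
    refine ⟨0, ?_⟩
    have : {n : ℕ | (blk n \ Set.univ).ncard ≤ 0} = Set.univ := by
      ext n; simp
    rw [this]; exact Filter.univ_mem
  sets_of_superset := by
    rintro N N' ⟨m, hm⟩ hNN'
    refine ⟨m, Filter.mem_of_superset hm fun n hn => ?_⟩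
    exact le_trans (Set.ncard_le_ncard (Set.diff_subset_diff_right hNN')
      ((blk_finite n).subset Set.diff_subset)) hn
  inter_sets := by
    rintro N N' ⟨m, hm⟩ ⟨m', hm'⟩
    refine ⟨m + m', Filter.mem_of_superset (Filter.inter_mem hm hm') ?_⟩
    rintro n ⟨h1, h2⟩
    calc (blk n \ (N ∩ N')).ncard = ((blk n \ N) ∪ (blk n \ N')).ncard := by
          rw [Set.diff_inter]
      _ ≤ (blk n \ N).ncard + (blk n \ N').ncard := Set.ncard_union_le _ _
      _ ≤ m + m' := add_le_add h1 h2

lemma mem_pf {F : Filter ℕ} {N : Set ℕ} :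
    N ∈ pf F ↔ ∃ m, {n | (blk n \ N).ncard ≤ m} ∈ F := Iff.rfl

lemma pf_isPFilter (F : Filter ℕ) : IsPFilter (pf F) := by
  rintro N hN Z ⟨k, hk⟩
  rcases mem_pf.mp hN with ⟨m, hm⟩
  refine mem_pf.mpr ⟨m + (m + 1) * k, Filter.mem_of_superset hm fun n hn => ?_⟩
  have hsplit : blk n \ (N \ Z) ⊆ (blk n \ N) ∪ (blk n ∩ N ∩ Z) := by
    intro x hx
    by_cases hxN : x ∈ N
    · right; exact ⟨⟨hx.1, hxN⟩, by
        rcases hx with ⟨hxb, hxnz⟩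
        by_contra hxZ
        exact hxnz ⟨hxN, hxZ⟩⟩
    · left; exact ⟨hx.1, hxN⟩
  have hfin : ((blk n \ N) ∪ (blk n ∩ N ∩ Z)).Finite :=
    ((blk_finite n).subset Set.diff_subset).union
      ((blk_finite n).subset (fun x hx => hx.1.1))
  calc (blk n \ (N \ Z)).ncard ≤ ((blk n \ N) ∪ (blk n ∩ N ∩ Z)).ncard :=
        Set.ncard_le_ncard hsplit hfin
    _ ≤ (blk n \ N).ncard + (blk n ∩ N ∩ Z).ncard := Set.ncard_union_le _ _
    _ ≤ m + (m + 1) * k := add_le_add hn (key_count hk _ _ m hn)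


abbrev PP := Finset ℕ × Finset (Finset ℕ)

noncomputable def dd : ℕ ≃ PP := Classical.choice nonempty_equiv_of_countable

open Classical in
noncomputable def fil (X : Set ℕ) (F : Finset ℕ) : Finset ℕ := F.filter (fun a => a ∈ X)

lemma mem_fil {X : Set ℕ} {F : Finset ℕ} {a : ℕ} : a ∈ fil X F ↔ a ∈ F ∧ a ∈ X := by
  simp [fil]

noncomputable def AX (X : Set ℕ) : Set ℕ := {n | fil X (dd n).1 ∈ (dd n).2}

open Classical in
/-- a point separating two distinct sets -/
noncomputable def sep (X Y : Set ℕ) : ℕ :=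
  if h : (X \ Y ∪ Y \ X).Nonempty then h.choose else 0

lemma sep_spec {X Y : Set ℕ} (h : X ≠ Y) : sep X Y ∈ X \ Y ∪ Y \ X := by
  have hne : (X \ Y ∪ Y \ X).Nonempty := by
    by_contra hc
    rw [Set.not_nonempty_iff_eq_empty] at hc
    apply h
    ext a
    have h1 : a ∉ X \ Y ∪ Y \ X := hc ▸ Set.notMem_empty a
    simp only [Set.mem_union, Set.mem_diff, not_or, not_and, not_not] at h1
    constructor
    · intro ha; exact h1.1 ha
    · intro ha; exact h1.2 ha
  rw [sep, dif_pos hne]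
  exact hne.choose_spec

lemma indep (s u : Set (Set ℕ)) (hs : s.Finite) (hu : u.Finite)
    (hdisj : ∀ X ∈ s, X ∉ u) :
    {n | (∀ X ∈ s, n ∈ AX X) ∧ ∀ Y ∈ u, n ∉ AX Y}.Infinite := by
  classical
  set v : Finset (Set ℕ) := hs.toFinset ∪ hu.toFinset with hv
  set F₀ : Finset ℕ := v.biUnion (fun X => v.image (fun Y => sep X Y)) with hF₀
  have hsepmem : ∀ X ∈ v, ∀ Y ∈ v, sep X Y ∈ F₀ := by
    intro X hX Y hY
    exact Finset.mem_biUnion.mpr ⟨X, hX, Finset.mem_image.mpr ⟨Y, hY, rfl⟩⟩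
  have hinj : ∀ F : Finset ℕ, F₀ ⊆ F → ∀ X ∈ v, ∀ Y ∈ v, X ≠ Y → fil X F ≠ fil Y F := by
    intro F hF X hX Y hY hXY heq
    have hp := sep_spec hXY
    have hpF : sep X Y ∈ F := hF (hsepmem X hX Y hY)
    rcases hp with ⟨h1, h2⟩ | ⟨h1, h2⟩
    · have : sep X Y ∈ fil X F := mem_fil.mpr ⟨hpF, h1⟩
      rw [heq] at this
      exact h2 (mem_fil.mp this).2
    · have : sep X Y ∈ fil Y F := mem_fil.mpr ⟨hpF, h1⟩
      rw [← heq] at this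
      exact h2 (mem_fil.mp this).2
  set B : ℕ := F₀.sup id + 1 with hB
  have hF₀lt : ∀ x ∈ F₀, x < B := fun x hx => Nat.lt_succ_of_le (Finset.le_sup (f := id) hx)
  set Fj : ℕ → Finset ℕ := fun j => F₀ ∪ Finset.range (B + j + 1) with hFj
  have hFjmax : ∀ j, B + j ∈ Fj j := fun j =>
    Finset.mem_union_right _ (Finset.mem_range.mpr (by omega))
  have hFjle : ∀ j, ∀ x ∈ Fj j, x ≤ B + j := by
    intro j x hx
    rcases Finset.mem_union.mp hx with h | h
    · have := hF₀lt x h; omega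
    · have := Finset.mem_range.mp h; omega
  have hFjinj : Function.Injective Fj := by
    intro j j' h
    have h1 := hFjle j' (B + j) (h ▸ hFjmax j)
    have h2 := hFjle j (B + j') (h ▸ hFjmax j')
    omega
  set Aj : ℕ → Finset (Finset ℕ) := fun j => hs.toFinset.image (fun X => fil X (Fj j)) with hAj
  set g : ℕ → ℕ := fun j => dd.symm (Fj j, Aj j) with hg
  refine Set.infinite_of_injective_forall_mem (f := g) ?_ fun j => ?_
  · intro j j' h
    have := dd.symm.injective h
    exact hFjinj (congrArg Prod.fst this)
  · have hdd : dd (g j) = (Fj j, Aj j) := dd.apply_symm_apply _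
    constructor
    · intro X hXs
      show fil X (dd (g j)).1 ∈ (dd (g j)).2
      rw [hdd]
      exact Finset.mem_image.mpr ⟨X, hs.mem_toFinset.mpr hXs, rfl⟩
    · intro Y hYu hmem
      have : fil Y (dd (g j)).1 ∈ (dd (g j)).2 := hmem
      rw [hdd] at this
      rcases Finset.mem_image.mp this with ⟨X, hX, heq⟩
      have hXs : X ∈ s := hs.mem_toFinset.mp hX
      have hXY : X ≠ Y := fun h => hdisj X hXs (h ▸ hYu)
      exact hinj (Fj j) Finset.subset_union_left X
        (Finset.mem_union_left _ (hs.mem_toFinset.mpr hXs))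
        Y (Finset.mem_union_right _ (hu.mem_toFinset.mpr hYu)) hXY heq

lemma AX_injective : Function.Injective AX := by
  intro X Y h
  by_contra hXY
  have := indep {X} {Y} (Set.finite_singleton X) (Set.finite_singleton Y)
    (by intro Z hZ; rw [Set.mem_singleton_iff] at *; rw [hZ]; simpa using hXY)
  rcases this.nonempty with ⟨n, hn1, hn2⟩
  exact hn2 Y rfl (h ▸ hn1 X rfl)


noncomputable def NX (X : Set ℕ) : Set ℕ := ⋃ n ∈ AX X, blk n

def gens (S : Set (Set ℕ)) : Set (Set ℕ) :=
  (AX '' S) ∪ ((fun X => (AX X)ᶜ) '' Sᶜ)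

noncomputable def Phi (S : Set (Set ℕ)) : Filter ℕ := pf (Filter.generate (gens S))

lemma NX_mem {S : Set (Set ℕ)} {X : Set ℕ} (hX : X ∈ S) : NX X ∈ Phi S := by
  refine mem_pf.mpr ⟨0, Filter.mem_generate_iff.mpr ⟨{AX X}, ?_, Set.finite_singleton _, ?_⟩⟩
  · intro v hv
    rw [Set.mem_singleton_iff] at hv
    exact Or.inl ⟨X, hX, hv.symm⟩
  · rw [Set.sInter_singleton]
    intro n hn
    have hsub : blk n ⊆ NX X := Set.subset_biUnion_of_mem hn
    have : blk n \ NX X = ∅ := Set.diff_eq_empty.mpr hsub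
    simp [this]

lemma NX_notMem {S : Set (Set ℕ)} {X : Set ℕ} (hX : X ∉ S) : NX X ∉ Phi S := by
  intro hmem
  rcases mem_pf.mp hmem with ⟨m, hm⟩
  rcases Filter.mem_generate_iff.mp hm with ⟨t, htg, htfin, htsub⟩
  set s₀ : Set (Set ℕ) := {Y | Y ∈ S ∧ AX Y ∈ t} with hs₀def
  set u₀ : Set (Set ℕ) := {Y | Y ∉ S ∧ (AX Y)ᶜ ∈ t} with hu₀def
  have hs₀fin : s₀.Finite := by
    apply (htfin.preimage AX_injective.injOn).subset
    intro Y hY; exact hY.2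
  have hu₀fin : u₀.Finite := by
    apply (htfin.preimage ((compl_injective.comp AX_injective).injOn)).subset
    intro Y hY; exact hY.2
  have hdisj : ∀ Y ∈ s₀, Y ∉ u₀ ∪ {X} := by
    rintro Y hY (h | h)
    · exact h.1 hY.1
    · rw [Set.mem_singleton_iff] at h; exact hX (h ▸ hY.1)
  have hW := indep s₀ (u₀ ∪ {X}) hs₀fin (hu₀fin.union (Set.finite_singleton X)) hdisj
  apply hW
  apply (Set.finite_Iio m).subset
  intro n hn
  have hninter : n ∈ ⋂₀ t := by
    intro v hv
    rcases htg hv with ⟨Y, hY, rfl⟩ | ⟨Y, hY, rfl⟩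
    · exact hn.1 Y ⟨hY, hv⟩
    · exact hn.2 Y (Or.inl ⟨hY, hv⟩)
  have hnT : (blk n \ NX X).ncard ≤ m := htsub hninter
  have hnAX : n ∉ AX X := hn.2 X (Or.inr rfl)
  have hdiff : blk n \ NX X = blk n := by
    refine Set.Subset.antisymm Set.diff_subset fun x hx => ⟨hx, fun hNX => ?_⟩
    rcases Set.mem_iUnion₂.mp hNX with ⟨j, hj, hxj⟩
    have : n = j := by
      by_contra hne
      exact Set.notMem_empty x (blk_disj hne ▸ ⟨hx, hxj⟩)
    exact absurd (this ▸ hj) hnAX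
  rw [hdiff, blk_ncard] at hnT
  exact Set.mem_Iio.mpr (by omega)

lemma Phi_injective : Function.Injective Phi := by
  intro S S' h
  by_contra hne
  have hex : ∃ X, (X ∈ S ∧ X ∉ S') ∨ (X ∈ S' ∧ X ∉ S) := by
    by_contra hc
    push_neg at hc
    apply hne
    ext X
    have := hc X
    tauto
  rcases hex with ⟨X, ⟨h1, h2⟩ | ⟨h1, h2⟩⟩
  · exact NX_notMem h2 (h ▸ NX_mem h1)
  · exact NX_notMem h2 (h ▸ NX_mem h1)

/-- There are exactly `2 ^ (2 ^ ℵ₀)` p-filters on `ℕ`. -/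
theorem card_pFilters :
    Cardinal.mk {σ : Filter ℕ // IsPFilter σ} = (2 : Cardinal) ^ ((2 : Cardinal) ^ Cardinal.aleph0) := by
  have hcard : Cardinal.mk (Set (Set ℕ)) = (2 : Cardinal) ^ ((2 : Cardinal) ^ Cardinal.aleph0) := by
    rw [Cardinal.mk_set, Cardinal.mk_set, Cardinal.mk_nat]
  apply le_antisymm
  · calc Cardinal.mk {σ : Filter ℕ // IsPFilter σ} ≤ Cardinal.mk (Filter ℕ) :=
          Cardinal.mk_subtype_le _
      _ ≤ Cardinal.mk (Set (Set ℕ)) :=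
          Cardinal.mk_le_of_injective (f := Filter.sets) (fun f g hfg => Filter.filter_eq hfg)
      _ = _ := hcard
  · rw [← hcard]
    exact Cardinal.mk_le_of_injective
      (f := fun S => (⟨Phi S, pf_isPFilter _⟩ : {σ : Filter ℕ // IsPFilter σ}))
      (fun S S' hSS' => Phi_injective (congrArg Subtype.val hSS'))
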